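/- In the Game of Privacy extended with independent uniform random bits a (known only to Alice) and c (known only to Carol), the mixed strategy profile in which Alice plays T and B each with probability 1/2 and Carol plays L and R each with probability 1/2 is a Nash equilibrium (in expected payoff), with expected payoffs (4,4) for Alice and Carol. -/

import Mathlib

inductive ACh | T | M | B
  deriving DecidableEq

instance : Fintype ACh := ⟨{.T, .M, .B}, fun x => by cases x <;> simp⟩

inductive CCh | L | Cc | R
  deriving DecidableEq

instance : Fintype CCh := ⟨{.L, .Cc, .R}, fun x => by cases x <;> simp⟩

def gA : ACh → CCh → ℚ
  | .T, .L => 0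
  | .T, .Cc => 0
  | .T, .R => 8
  | .M, .L => 2
  | .M, .Cc => 2
  | .M, .R => 2
  | .B, .L => 8
  | .B, .Cc => 0
  | .B, .R => 0

def gC : ACh → CCh → ℚ
  | .T, .L => 8
  | .T, .Cc => 2
  | .T, .R => 0
  | .M, .L => 0
  | .M, .Cc => 2
  | .M, .R => 0
  | .B, .L => 0
  | .B, .Cc => 2
  | .B, .R => 8

def IsMixA (p : ACh → ℚ) : Prop := (∀ x, 0 ≤ p x) ∧ p .T + p .M + p .B = 1
def IsMixC (q : CCh → ℚ) : Prop := (∀ y, 0 ≤ q y) ∧ q .L + q .Cc + q .R = 1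

def EA (p : ACh → ℚ) (q : CCh → ℚ) : ℚ := ∑ x : ACh, ∑ y : CCh, p x * q y * gA x y
def EC (p : ACh → ℚ) (q : CCh → ℚ) : ℚ := ∑ x : ACh, ∑ y : CCh, p x * q y * gC x y

def pstar : ACh → ℚ := fun x => match x with | .T => 1/2 | .M => 0 | .B => 1/2
def qstar : CCh → ℚ := fun y => match y with | .L => 1/2 | .Cc => 0 | .R => 1/2

/-- The half-half mixtures on {T,B} and {L,R} form a mixed Nash equilibrium with
expected payoffs (4,4). -/
theorem privacy_mixed_nash :
    IsMixA pstar ∧ IsMixC qstar ∧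
    EA pstar qstar = 4 ∧ EC pstar qstar = 4 ∧
    (∀ p : ACh → ℚ, IsMixA p → EA p qstar ≤ EA pstar qstar) ∧
    (∀ q : CCh → ℚ, IsMixC q → EC pstar q ≤ EC pstar qstar) := by
  have hEA : ∀ p : ACh → ℚ, EA p qstar = 4 * p .T + 2 * p .M + 4 * p .B := by
    intro p
    show (∑ x ∈ ({.T,.M,.B} : Finset ACh), ∑ y ∈ ({.L,.Cc,.R} : Finset CCh),
      p x * qstar y * gA x y) = _
    simp [Finset.sum_insert, gA, qstar]; ring
  have hEC : ∀ q : CCh → ℚ, EC pstar q = 4 * q .L + 2 * q .Cc + 4 * q .R := by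
    intro q
    show (∑ x ∈ ({.T,.M,.B} : Finset ACh), ∑ y ∈ ({.L,.Cc,.R} : Finset CCh),
      pstar x * q y * gC x y) = _
    simp [Finset.sum_insert, gC, pstar]; ring
  have hA4 : EA pstar qstar = 4 := by rw [hEA]; norm_num [pstar]
  have hC4 : EC pstar qstar = 4 := by rw [hEC]; norm_num [qstar]
  refine ⟨⟨fun x => by cases x <;> norm_num [pstar], by norm_num [pstar]⟩,
    ⟨fun y => by cases y <;> norm_num [qstar], by norm_num [qstar]⟩, hA4, hC4, ?_, ?_⟩
  · intro p ⟨hp, hs⟩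
    rw [hEA, hA4]
    nlinarith [hp ACh.M]
  · intro q ⟨hq, hs⟩
    rw [hEC, hC4]
    nlinarith [hq CCh.Cc]
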